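/- A permutation π ∈ S_n is 321-avoiding if and only if its image P-tableau under the Robinson–Schensted correspondence has at most two rows. -/

import Mathlib

/-- A permutation avoids the pattern 321 if it has no decreasing subsequence of length 3. -/
def Avoids321 {n : ℕ} (π : Equiv.Perm (Fin n)) : Prop :=
  ∀ i j k : Fin n, i < j → j < k → ¬ (π k < π j ∧ π j < π i)

/-- The set of positions of left-to-right maxima of a permutation. -/
def LtrSet {n : ℕ} (π : Equiv.Perm (Fin n)) : Finset (Fin n) :=
  Finset.univ.filter (fun i => ∀ j, j ≤ i → π j ≤ π i)

/-- The block number of a permutation (0-based version of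
`|{1 ≤ i ≤ n : π(j) ≤ i for all j ≤ i}|`). -/
def blockNum {n : ℕ} (π : Equiv.Perm (Fin n)) : ℕ :=
  (Finset.univ.filter (fun i : Fin n => ∀ j, j ≤ i → π j ≤ i)).card

/-- The descent set of a permutation, as a set of 1-based positions in `[n-1]`. -/
def DesSet {n : ℕ} (π : Equiv.Perm (Fin n)) : Finset ℕ :=
  Finset.image (fun i : Fin n => (i : ℕ) + 1)
    (Finset.univ.filter (fun i : Fin n => ∃ h : (i : ℕ) + 1 < n, π ⟨(i : ℕ) + 1, h⟩ < π i))

/-- The last descent of a permutation (`0` if there is no descent). -/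
def ldes {n : ℕ} (π : Equiv.Perm (Fin n)) : ℕ := (DesSet π).sup id

/-- Schensted row insertion: insert `x` into an increasing row, returning the new
row and the bumped entry (if any). -/
def insertRow : List ℕ → ℕ → List ℕ × Option ℕ
  | [], x => ([x], none)
  | a :: as, x =>
    if x < a then (x :: as, some a)
    else
      let r := insertRow as x
      (a :: r.1, r.2)

/-- Schensted insertion of an entry into a tableau (given as its list of rows). -/
def insertTableau : List (List ℕ) → ℕ → List (List ℕ)
  | [], x => [[x]]
  | r :: rs, x =>
    match insertRow r x with
    | (r', none) => r' :: rs
    | (r', some y) => r' :: insertTableau rs y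

/-- The Robinson–Schensted insertion tableau `P_π` of a word, as a list of rows. -/
def RSP (w : List ℕ) : List (List ℕ) := w.foldl insertTableau []

namespace RS321

/-! ### insertRow lemmas -/

lemma ir_mem_self (r : List ℕ) (x : ℕ) : x ∈ (insertRow r x).1 := by
  induction r with
  | nil => simp [insertRow]
  | cons a as ih =>
    by_cases h : x < a <;> simp [insertRow, h]
    exact Or.inr ih

lemma ir_some {r : List ℕ} {x y : ℕ} (h : (insertRow r x).2 = some y) :
    x < y ∧ y ∈ r := by
  induction r with
  | nil => simp [insertRow] at h
  | cons a as ih =>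
    by_cases hx : x < a
    · simp [insertRow, hx] at h
      subst h; exact ⟨hx, by simp⟩
    · simp [insertRow, hx] at h
      obtain ⟨h1, h2⟩ := ih h
      exact ⟨h1, by simp [h2]⟩

lemma ir_none {r : List ℕ} {x : ℕ} (h : (insertRow r x).2 = none) :
    ∀ a ∈ r, ¬ x < a := by
  induction r with
  | nil => simp
  | cons a as ih =>
    by_cases hx : x < a
    · simp [insertRow, hx] at h
    · simp [insertRow, hx] at h
      intro b hb
      rcases List.mem_cons.mp hb with rfl | hb
      · exact hx
      · exact ih h b hb

lemma ir_none_eq {r : List ℕ} {x : ℕ} (h : (insertRow r x).2 = none) :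
    (insertRow r x).1 = r ++ [x] := by
  induction r with
  | nil => simp [insertRow]
  | cons a as ih =>
    by_cases hx : x < a
    · simp [insertRow, hx] at h
    · simp [insertRow, hx] at h ⊢
      exact ih h

lemma ir_bump_of_mem {r : List ℕ} {a x : ℕ} (ha : a ∈ r) (hx : x < a) :
    ∃ y, (insertRow r x).2 = some y := by
  induction r with
  | nil => simp at ha
  | cons b bs ih =>
    by_cases hb : x < b
    · exact ⟨b, by simp [insertRow, hb]⟩
    · rcases List.mem_cons.mp ha with rfl | ha
      · exact absurd hx hb
      · obtain ⟨y, hy⟩ := ih ha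
        exact ⟨y, by simp [insertRow, hb, hy]⟩

lemma ir_sub {r : List ℕ} {x b : ℕ} (h : b ∈ (insertRow r x).1) :
    b = x ∨ b ∈ r := by
  induction r with
  | nil => simp [insertRow] at h; exact Or.inl h
  | cons a as ih =>
    by_cases hx : x < a <;> simp [insertRow, hx] at h
    · rcases h with rfl | h
      · exact Or.inl rfl
      · exact Or.inr (by simp [h])
    · rcases h with rfl | h
      · exact Or.inr (by simp)
      · rcases ih h with h | h
        · exact Or.inl h
        · exact Or.inr (by simp [h])

lemma ir_keep {r : List ℕ} {x b : ℕ} (h : b ∈ r) :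
    b ∈ (insertRow r x).1 ∨ (insertRow r x).2 = some b := by
  induction r with
  | nil => simp at h
  | cons a as ih =>
    by_cases hx : x < a <;> simp [insertRow, hx]
    · rcases List.mem_cons.mp h with rfl | h
      · exact Or.inr rfl
      · exact Or.inl (Or.inr h)
    · rcases List.mem_cons.mp h with rfl | h
      · exact Or.inl (Or.inl rfl)
      · rcases ih h with h | h
        · exact Or.inl (Or.inr h)
        · exact Or.inr h

lemma ir_first {r : List ℕ} {x y : ℕ} (hs : r.Pairwise (· < ·))
    (h : (insertRow r x).2 = some y) : ∀ a ∈ r, a < y → a ≤ x := by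
  induction r with
  | nil => simp
  | cons b bs ih =>
    rcases List.pairwise_cons.mp hs with ⟨hb, hbs⟩
    by_cases hx : x < b
    · simp [insertRow, hx] at h
      subst h
      intro a ha hay
      rcases List.mem_cons.mp ha with rfl | ha
      · omega
      · exact absurd (hb a ha) (by omega)
    · simp [insertRow, hx] at h
      intro a ha hay
      rcases List.mem_cons.mp ha with rfl | ha
      · omega
      · exact ih hbs h a ha hay

lemma ir_min {r : List ℕ} {x y : ℕ} (hs : r.Pairwise (· < ·))
    (h : (insertRow r x).2 = some y) : ∀ a ∈ r, x < a → y ≤ a := by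
  induction r with
  | nil => simp [insertRow] at h
  | cons b bs ih =>
    rcases List.pairwise_cons.mp hs with ⟨hb, hbs⟩
    intro a ha hxa
    by_cases hx : x < b
    · simp [insertRow, hx] at h
      subst h
      rcases List.mem_cons.mp ha with rfl | ha
      · exact le_refl a
      · exact le_of_lt (hb a ha)
    · simp [insertRow, hx] at h
      rcases List.mem_cons.mp ha with rfl | ha
      · exact absurd hxa hx
      · exact ih hbs h a ha hxa

lemma ir_sorted {r : List ℕ} {x : ℕ} (hs : r.Pairwise (· < ·)) (hx : x ∉ r) :
    ((insertRow r x).1).Pairwise (· < ·) := by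
  induction r with
  | nil => simp [insertRow]
  | cons a as ih =>
    rcases List.pairwise_cons.mp hs with ⟨ha, has⟩
    by_cases h : x < a
    · simp [insertRow, h]
      exact ⟨fun b hb => h.trans (ha b hb), has⟩
    · simp [insertRow, h]
      refine ⟨?_, ih has (fun hc => hx (by simp [hc]))⟩
      intro b hb
      rcases ir_sub hb with rfl | hb
      · have : a ≠ b := fun hc => hx (by simp [hc])
        omega
      · exact ha b hb


/-! ### insertTableau lemmas -/

lemma it_cons_none {r : List ℕ} {rs : List (List ℕ)} {z : ℕ}
    (h : (insertRow r z).2 = none) :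
    insertTableau (r :: rs) z = (insertRow r z).1 :: rs := by
  rcases hrz : insertRow r z with ⟨r', o⟩
  rw [hrz] at h
  simp at h
  subst h
  simp [insertTableau, hrz]

lemma it_cons_some {r : List ℕ} {rs : List (List ℕ)} {z y : ℕ}
    (h : (insertRow r z).2 = some y) :
    insertTableau (r :: rs) z = (insertRow r z).1 :: insertTableau rs y := by
  rcases hrz : insertRow r z with ⟨r', o⟩
  rw [hrz] at h
  simp at h
  subst h
  simp [insertTableau, hrz]

lemma it_head {r : List ℕ} {rs : List (List ℕ)} {z : ℕ} :
    ∃ rs', insertTableau (r :: rs) z = (insertRow r z).1 :: rs' := by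
  rcases ho : (insertRow r z).2 with _ | y
  · exact ⟨rs, it_cons_none ho⟩
  · exact ⟨insertTableau rs y, it_cons_some ho⟩

lemma it_len_pos (T : List (List ℕ)) (z : ℕ) : 1 ≤ (insertTableau T z).length := by
  cases T with
  | nil => simp [insertTableau]
  | cons r rs =>
    obtain ⟨rs', h⟩ := it_head (r := r) (rs := rs) (z := z)
    simp [h]

lemma it_len (T : List (List ℕ)) (z : ℕ) : T.length ≤ (insertTableau T z).length := by
  induction T generalizing z with
  | nil => simp [insertTableau]
  | cons r rs ih =>
    rcases ho : (insertRow r z).2 with _ | y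
    · simp [it_cons_none ho]
    · simp only [it_cons_some ho, List.length_cons]
      have := ih (z := y)
      omega

lemma it_mem_self (T : List (List ℕ)) (z : ℕ) :
    ∃ r' ∈ insertTableau T z, z ∈ r' := by
  cases T with
  | nil => exact ⟨[z], by simp [insertTableau]⟩
  | cons r rs =>
    obtain ⟨rs', h⟩ := it_head (r := r) (rs := rs) (z := z)
    exact ⟨(insertRow r z).1, by simp [h], ir_mem_self r z⟩

lemma it_mem {T : List (List ℕ)} {r : List ℕ} {v z : ℕ}
    (hr : r ∈ T) (hv : v ∈ r) : ∃ r' ∈ insertTableau T z, v ∈ r' := by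
  induction T generalizing z with
  | nil => simp at hr
  | cons r0 rs ih =>
    rcases List.mem_cons.mp hr with rfl | hr
    · rcases ir_keep (x := z) hv with h | h
      · obtain ⟨rs', hrs'⟩ := it_head (r := r) (rs := rs) (z := z)
        exact ⟨(insertRow r z).1, by simp [hrs'], h⟩
      · rw [it_cons_some h]
        obtain ⟨r', hr', hv'⟩ := it_mem_self rs v
        exact ⟨r', by simp [hr'], hv'⟩
    · rcases ho : (insertRow r0 z).2 with _ | y
      · rw [it_cons_none ho]
        exact ⟨r, by simp [hr], hv⟩
      · rw [it_cons_some ho]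
        obtain ⟨r', hr', hv'⟩ := ih (z := y) hr
        exact ⟨r', by simp [hr'], hv'⟩

lemma it_vals {T : List (List ℕ)} {r' : List ℕ} {v z : ℕ}
    (hr : r' ∈ insertTableau T z) (hv : v ∈ r') :
    v = z ∨ ∃ r ∈ T, v ∈ r := by
  induction T generalizing z with
  | nil =>
    simp [insertTableau] at hr
    subst hr
    simp at hv
    exact Or.inl hv
  | cons r0 rs ih =>
    rcases ho : (insertRow r0 z).2 with _ | y
    · rw [it_cons_none ho] at hr
      rcases List.mem_cons.mp hr with rfl | hr
      · rcases ir_sub hv with h | h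
        · exact Or.inl h
        · exact Or.inr ⟨r0, by simp, h⟩
      · exact Or.inr ⟨r', by simp [hr], hv⟩
    · rw [it_cons_some ho] at hr
      rcases List.mem_cons.mp hr with rfl | hr
      · rcases ir_sub hv with h | h
        · exact Or.inl h
        · exact Or.inr ⟨r0, by simp, h⟩
      · rcases ih hr with h | ⟨r, h1, h2⟩
        · subst h
          exact Or.inr ⟨r0, by simp, (ir_some ho).2⟩
        · exact Or.inr ⟨r, by simp [h1], h2⟩

lemma RSP_append_singleton (w : List ℕ) (z : ℕ) :
    RSP (w ++ [z]) = insertTableau (RSP w) z := by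
  simp [RSP, List.foldl_append]

lemma foldl_len_mono (l : List ℕ) (T : List (List ℕ)) :
    T.length ≤ (List.foldl insertTableau T l).length := by
  induction l generalizing T with
  | nil => simp
  | cons a l ih => exact le_trans (it_len T a) (by simpa using ih (insertTableau T a))


/-! ### the Good invariant (for the hard direction: pattern implies height ≥ 3) -/

/-- Either the tableau already has three rows, or it has a first-row element `v ≥ b`
dominated by a second-row element `u > v`. -/
def Good (b : ℕ) (T : List (List ℕ)) : Prop :=
  3 ≤ T.length ∨
    ∃ r0 r1 rest, T = r0 :: r1 :: rest ∧ ∃ v ∈ r0, ∃ u ∈ r1, b ≤ v ∧ v < u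

lemma good_est {T : List (List ℕ)} {a b : ℕ} (ha : ∃ r ∈ T, a ∈ r) (hab : b < a) :
    Good b (insertTableau T b) := by
  obtain ⟨r, hrT, har⟩ := ha
  cases T with
  | nil => simp at hrT
  | cons r0 rs =>
    cases rs with
    | nil =>
      simp at hrT
      subst hrT
      obtain ⟨y, hy⟩ := ir_bump_of_mem har hab
      rw [it_cons_some hy]
      refine Or.inr ⟨(insertRow r b).1, [y], [], by simp [insertTableau], b,
        ir_mem_self r b, y, by simp, le_refl b, (ir_some hy).1⟩
    | cons r1 rest =>
      rcases List.mem_cons.mp hrT with rfl | hrT'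
      · -- a ∈ r0 (here r = r0)
        obtain ⟨y, hy⟩ := ir_bump_of_mem har hab
        rw [it_cons_some hy]
        rcases ho : (insertRow r1 y).2 with _ | y2
        · rw [it_cons_none ho, ir_none_eq ho]
          exact Or.inr ⟨_, _, _, rfl, b, ir_mem_self r b, y, by simp,
            le_refl b, (ir_some hy).1⟩
        · rw [it_cons_some ho]
          refine Or.inl ?_
          have := it_len_pos rest y2
          simp
          omega
      · rcases List.mem_cons.mp hrT' with rfl | hrest
        · -- a ∈ r1 (r = r1)
          rcases hz : (insertRow r0 b).2 with _ | y
          · rw [it_cons_none hz, ir_none_eq hz]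
            exact Or.inr ⟨_, _, _, rfl, b, by simp, a, har, le_refl b, hab⟩
          · rw [it_cons_some hz]
            rcases ho : (insertRow r y).2 with _ | y2
            · rw [it_cons_none ho, ir_none_eq ho]
              exact Or.inr ⟨_, _, _, rfl, b, ir_mem_self r0 b, y, by simp,
                le_refl b, (ir_some hz).1⟩
            · rw [it_cons_some ho]
              refine Or.inl ?_
              have := it_len_pos rest y2
              simp
              omega
        · -- r ∈ rest : T already has ≥ 3 rows
          refine Or.inl ?_
          have h3 : 3 ≤ (r0 :: r1 :: rest).length := by
            have : rest ≠ [] := List.ne_nil_of_mem hrest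
            have := List.length_pos_iff.mpr this
            simp
            omega
          exact le_trans h3 (it_len _ _)

lemma good_pres {T : List (List ℕ)} {b z : ℕ} (h : Good b T) :
    Good b (insertTableau T z) := by
  rcases h with h | ⟨r0, r1, rest, rfl, v, hv, u, hu, hbv, hvu⟩
  · exact Or.inl (le_trans h (it_len _ _))
  · rcases hz : (insertRow r0 z).2 with _ | y
    · rw [it_cons_none hz, ir_none_eq hz]
      exact Or.inr ⟨_, _, _, rfl, v, by simp [hv], u, hu, hbv, hvu⟩
    · rw [it_cons_some hz]
      rcases ho : (insertRow r1 y).2 with _ | y2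
      · rw [it_cons_none ho, ir_none_eq ho]
        have hvmem : v ∈ (insertRow r0 z).1 := by
          rcases ir_keep (x := z) hv with h | h
          · exact h
          · rw [hz] at h
            simp at h
            subst h
            exact absurd hvu (ir_none ho u hu)
        exact Or.inr ⟨_, _, _, rfl, v, hvmem, u, by simp [hu], hbv, hvu⟩
      · rw [it_cons_some ho]
        refine Or.inl ?_
        have := it_len_pos rest y2
        simp
        omega

lemma good_fin {T : List (List ℕ)} {b c : ℕ} (h : Good b T)
    (hs : ∀ r0 rest, T = r0 :: rest → r0.Pairwise (· < ·)) (hc : c < b) :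
    3 ≤ (insertTableau T c).length := by
  rcases h with h | ⟨r0, r1, rest, rfl, v, hv, u, hu, hbv, hvu⟩
  · exact le_trans h (it_len _ _)
  · have hcv : c < v := lt_of_lt_of_le hc hbv
    obtain ⟨y, hy⟩ := ir_bump_of_mem hv hcv
    have hyv : y ≤ v := ir_min (hs r0 _ rfl) hy v hv hcv
    have hyu : y < u := lt_of_le_of_lt hyv hvu
    obtain ⟨y2, hy2⟩ := ir_bump_of_mem hu hyu
    rw [it_cons_some hy, it_cons_some hy2]
    have := it_len_pos rest y2
    simp
    omega

/-! ### base invariants: sortedness of the first row, values come from the word -/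

lemma base_all (w : List ℕ) (hnd : w.Nodup) :
    (∀ r ∈ RSP w, ∀ v ∈ r, v ∈ w) ∧
      (∀ r0 rest, RSP w = r0 :: rest → r0.Pairwise (· < ·)) := by
  induction w using List.reverseRecOn with
  | nil => simp [RSP]
  | append_singleton w z ih =>
    have hw : w.Nodup ∧ z ∉ w := by
      rw [List.nodup_append] at hnd
      refine ⟨hnd.1, fun hc => ?_⟩
      exact hnd.2.2 z hc z (by simp) rfl
    obtain ⟨ihm, ihs⟩ := ih hw.1
    rw [RSP_append_singleton]
    constructor
    · intro r hr v hv
      rcases it_vals hr hv with rfl | ⟨r', h1, h2⟩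
      · simp
      · exact List.mem_append_left _ (ihm r' h1 v h2)
    · intro r0 rest heq
      cases hT : RSP w with
      | nil =>
        rw [hT] at heq
        simp [insertTableau] at heq
        rcases heq with ⟨h1, h2⟩
        simp [← h1]
      | cons q0 qs =>
        rw [hT] at heq
        obtain ⟨rs', hrs'⟩ := it_head (r := q0) (rs := qs) (z := z)
        rw [hrs'] at heq
        have hr0 : r0 = (insertRow q0 z).1 := by
          exact (List.cons.injEq _ _ _ _ ▸ heq).1.symm
        subst hr0
        refine ir_sorted (ihs q0 qs hT) (fun hc => hw.2 ?_)
        exact ihm q0 (by simp [hT]) z hc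


/-! ### patterns -/

/-- The word `w` contains a (strictly) decreasing subsequence of length 3. -/
def Pat (w : List ℕ) : Prop :=
  ∃ i j k : ℕ, ∃ h1 : i < j, ∃ h2 : j < k, ∃ h3 : k < w.length,
    w[k] < (w[j]'(h2.trans h3)) ∧ (w[j]'(h2.trans h3)) < (w[i]'((h1.trans h2).trans h3))

lemma pat_append {w : List ℕ} (l : List ℕ) (h : Pat w) : Pat (w ++ l) := by
  obtain ⟨i, j, k, h1, h2, h3, ha, hb⟩ := h
  have h3' : k < (w ++ l).length := by simp; omega
  refine ⟨i, j, k, h1, h2, h3', ?_, ?_⟩ <;>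
    rw [List.getElem_append_left, List.getElem_append_left] <;>
    first | assumption | omega

lemma mem_RSP {w : List ℕ} {v : ℕ} (hv : v ∈ w) : ∃ r ∈ RSP w, v ∈ r := by
  induction w using List.reverseRecOn with
  | nil => simp at hv
  | append_singleton w z ih =>
    rw [RSP_append_singleton]
    rcases List.mem_append.mp hv with hv | hv
    · obtain ⟨r, hr, hvr⟩ := ih hv
      exact it_mem hr hvr
    · simp at hv
      subst hv
      exact it_mem_self _ _

lemma dir2 (w : List ℕ) (hnd : w.Nodup) {i j k : ℕ} (h1 : i < j) (h2 : j < k)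
    (h3 : k < w.length) (ha : w[k] < w[j]'(h2.trans h3))
    (hb : (w[j]'(h2.trans h3)) < w[i]'((h1.trans h2).trans h3)) :
    3 ≤ (RSP w).length := by
  have hjlen : j < w.length := h2.trans h3
  have hilen : i < w.length := (h1.trans h2).trans h3
  -- after the first j+1 letters, Good w[j]
  have hstep : ∀ t, j + 1 ≤ t → t ≤ k → Good (w[j]) (RSP (w.take t)) := by
    intro t
    induction t with
    | zero => omega
    | succ t ih =>
      intro ht1 ht2
      have htlen : t < w.length := by omega
      have htake : w.take (t + 1) = w.take t ++ [w[t]] := (List.take_concat_get' w t htlen).symm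
      rcases Nat.lt_or_ge j t with hjt | hjt
      · -- preservation step
        rw [htake, RSP_append_singleton]
        exact good_pres (ih (by omega) (by omega))
      · -- establishment step : t = j
        have : t = j := by omega
        subst this
        rw [htake, RSP_append_singleton]
        have hmem : w[i] ∈ w.take t := by
          have : (w.take t)[i]'(by simp; omega) = w[i] := by rw [List.getElem_take]
          rw [← this]
          exact List.getElem_mem _
        exact good_est (mem_RSP hmem) hb
  have hgood : Good (w[j]) (RSP (w.take k)) := hstep k (by omega) (le_refl k)
  have hsorted := (base_all (w.take k) (hnd.sublist (List.take_sublist _ _))).2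
  have h3' : 3 ≤ (RSP (w.take (k + 1))).length := by
    rw [show w.take (k+1) = w.take k ++ [w[k]] from (List.take_concat_get' w k h3).symm,
      RSP_append_singleton]
    exact good_fin hgood hsorted ha
  have hsplit : RSP w = List.foldl insertTableau (RSP (w.take (k+1))) (w.drop (k+1)) := by
    conv_lhs => rw [← List.take_append_drop (k+1) w]
    simp only [RSP]
    rw [List.foldl_append]
  rw [hsplit]
  exact le_trans h3' (foldl_len_mono _ _)


/-! ### invariant for the direction: height ≥ 3 implies a 321 pattern -/

/-- Every entry `y` of the second row was bumped there: it occurs at some position `p`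
of the word, some later letter (at position `s`) is smaller than it, and every first-row
entry smaller than `y` either occurs after position `p` or is smaller than the letter
at position `s`. -/
def R1cond (w : List ℕ) (r0 r1 : List ℕ) : Prop :=
  ∀ y ∈ r1, ∃ p s : ℕ, ∃ hp : p < w.length, ∃ hs : s < w.length, p < s ∧
    w[p] = y ∧ w[s] < y ∧
    ∀ v ∈ r0, v < y →
      ((∃ q, ∃ hq : q < w.length, p < q ∧ w[q] = v) ∨ v < w[s])

def Inv (w : List ℕ) : Prop :=
  Pat w ∨
    ((RSP w).length ≤ 2 ∧
      ∀ r0 r1 rest, RSP w = r0 :: r1 :: rest → R1cond w r0 r1)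

lemma getElem_append_left' {w : List ℕ} {z : ℕ} {p : ℕ} (hp : p < w.length) :
    (w ++ [z])[p]'(by simp; omega) = w[p] := List.getElem_append_left hp

lemma getElem_append_last (w : List ℕ) (z : ℕ) :
    (w ++ [z])[w.length]'(by simp) = z := by simp

lemma pos_of_mem {w : List ℕ} {v : ℕ} (h : v ∈ w) :
    ∃ q, ∃ hq : q < w.length, w[q] = v := List.mem_iff_getElem.mp h

lemma inv_all (w : List ℕ) (hnd : w.Nodup) : Inv w := by
  induction w using List.reverseRecOn with
  | nil =>
    refine Or.inr ⟨by simp [RSP], ?_⟩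
    intro r0 r1 rest h
    simp [RSP] at h
  | append_singleton w z ih =>
    have hw : w.Nodup ∧ z ∉ w := by
      rw [List.nodup_append] at hnd
      exact ⟨hnd.1, fun hc => hnd.2.2 z hc z (by simp) rfl⟩
    obtain ⟨hmem, hsort⟩ := base_all w hw.1
    rcases ih hw.1 with hpat | ⟨hlen, hR1⟩
    · exact Or.inl (pat_append [z] hpat)
    · have hlen' : w.length < (w ++ [z]).length := by simp
      cases hT : RSP w with
      | nil =>
        refine Or.inr ⟨?_, ?_⟩
        · rw [RSP_append_singleton, hT]; simp [insertTableau]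
        · intro r0 r1 rest h
          rw [RSP_append_singleton, hT] at h
          simp [insertTableau] at h
      | cons q0 qs =>
        have hs0 : q0.Pairwise (· < ·) := hsort q0 qs hT
        have hq0w : ∀ v ∈ q0, v ∈ w := fun v hv => hmem q0 (by simp [hT]) v hv
        cases qs with
        | nil =>
          rcases ho : (insertRow q0 z).2 with _ | y
          · refine Or.inr ⟨?_, ?_⟩
            · rw [RSP_append_singleton, hT, it_cons_none ho]; simp
            · intro r0 r1 rest h
              rw [RSP_append_singleton, hT, it_cons_none ho] at h
              simp at h
          · have hzy : z < y ∧ y ∈ q0 := ir_some ho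
            refine Or.inr ⟨?_, ?_⟩
            · rw [RSP_append_singleton, hT, it_cons_some ho]; simp [insertTableau]
            · intro r0 r1 rest h
              rw [RSP_append_singleton, hT, it_cons_some ho] at h
              simp only [insertTableau] at h
              rw [List.cons.injEq, List.cons.injEq] at h
              obtain ⟨h0, h1, -⟩ := h
              subst h0 h1
              intro y0 hy0
              simp at hy0
              subst hy0
              obtain ⟨p, hp, hpv⟩ := pos_of_mem (hq0w _ hzy.2)
              refine ⟨p, w.length, by simp; omega, by simp, by omega, ?_, ?_, ?_⟩
              · rw [getElem_append_left' hp, hpv]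
              · rw [getElem_append_last]; exact hzy.1
              · intro v hv hvy
                rcases ir_sub hv with rfl | hvq
                · exact Or.inl ⟨w.length, by simp, by omega, by simp⟩
                · have hvz : v ≤ z := ir_first hs0 ho v hvq hvy
                  have : v ≠ z := fun hc => hw.2 (hc ▸ hq0w v hvq)
                  refine Or.inr ?_
                  rw [getElem_append_last]
                  omega
        | cons q1 qrest =>
          have hqrest : qrest = [] := by
            have h2 := hlen
            rw [hT] at h2
            simp only [List.length_cons] at h2
            exact List.length_eq_zero_iff.mp (by omega)
          subst hqrest
          have hR1' : R1cond w q0 q1 := hR1 q0 q1 [] hT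
          rcases hz : (insertRow q0 z).2 with _ | y
          · -- z appended to the first row
            refine Or.inr ⟨?_, ?_⟩
            · rw [RSP_append_singleton, hT, it_cons_none hz]; simp
            · intro r0 r1 rest h
              rw [RSP_append_singleton, hT, it_cons_none hz] at h
              rw [List.cons.injEq, List.cons.injEq] at h
              obtain ⟨h0, h1, -⟩ := h
              subst h0 h1
              intro y0 hy0
              obtain ⟨p, s, hp, hs, hps, hpe, hse, hcond⟩ := hR1' y0 hy0
              refine ⟨p, s, by simp; omega, by simp; omega, hps, ?_, ?_, ?_⟩
              · rw [getElem_append_left' hp]; exact hpe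
              · rw [getElem_append_left' hs]; exact hse
              · intro v hv hvy
                rw [ir_none_eq hz] at hv
                rcases List.mem_append.mp hv with hvq | hvz
                · rcases hcond v hvq hvy with ⟨q, hq, hpq, hqe⟩ | hlt
                  · exact Or.inl ⟨q, by simp; omega, hpq, by rw [getElem_append_left' hq]; exact hqe⟩
                  · refine Or.inr ?_; rw [getElem_append_left' hs]; exact hlt
                · simp at hvz
                  subst hvz
                  exact Or.inl ⟨w.length, by simp, by omega, by simp⟩
          · have hzy : z < y ∧ y ∈ q0 := ir_some hz
            rcases ho : (insertRow q1 y).2 with _ | y2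
            · -- y appended to the second row
              refine Or.inr ⟨?_, ?_⟩
              · rw [RSP_append_singleton, hT, it_cons_some hz, it_cons_none ho]; simp
              · intro r0 r1 rest h
                rw [RSP_append_singleton, hT, it_cons_some hz, it_cons_none ho] at h
                rw [List.cons.injEq, List.cons.injEq] at h
                obtain ⟨h0, h1, -⟩ := h
                subst h0 h1
                intro y0 hy0
                rw [ir_none_eq ho] at hy0
                rcases List.mem_append.mp hy0 with hy0q | hy0y
                · -- old second-row entry
                  obtain ⟨p, s, hp, hs, hps, hpe, hse, hcond⟩ := hR1' y0 hy0q
                  refine ⟨p, s, by simp; omega, by simp; omega, hps, ?_, ?_, ?_⟩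
                  · rw [getElem_append_left' hp]; exact hpe
                  · rw [getElem_append_left' hs]; exact hse
                  · intro v hv hvy
                    rcases ir_sub hv with rfl | hvq
                    · exact Or.inl ⟨w.length, by simp, by omega, by simp⟩
                    · rcases hcond v hvq hvy with ⟨q, hq, hpq, hqe⟩ | hlt
                      · exact Or.inl ⟨q, by simp; omega, hpq,
                          by rw [getElem_append_left' hq]; exact hqe⟩
                      · refine Or.inr ?_; rw [getElem_append_left' hs]; exact hlt
                · -- the new entry y of the second row
                  simp at hy0y
                  subst hy0y
                  obtain ⟨p, hp, hpv⟩ := pos_of_mem (hq0w _ hzy.2)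
                  refine ⟨p, w.length, by simp; omega, by simp, by omega, ?_, ?_, ?_⟩
                  · rw [getElem_append_left' hp, hpv]
                  · rw [getElem_append_last]; exact hzy.1
                  · intro v hv hvy
                    rcases ir_sub hv with rfl | hvq
                    · exact Or.inl ⟨w.length, by simp, by omega, by simp⟩
                    · have hvz : v ≤ z := ir_first hs0 hz v hvq hvy
                      have : v ≠ z := fun hc => hw.2 (hc ▸ hq0w v hvq)
                      refine Or.inr ?_
                      rw [getElem_append_last]
                      omega
            · -- a second-row entry is bumped: we extract a 321 pattern
              refine Or.inl ?_
              have hyy2 : y < y2 ∧ y2 ∈ q1 := ir_some ho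
              obtain ⟨p, s, hp, hs, hps, hpe, hse, hcond⟩ := hR1' y2 hyy2.2
              rcases hcond y hzy.2 hyy2.1 with ⟨q, hq, hpq, hqe⟩ | hlt
              · refine ⟨p, q, w.length, hpq, hq, by simp, ?_, ?_⟩
                · rw [getElem_append_last, getElem_append_left' hq, hqe]; exact hzy.1
                · rw [getElem_append_left' hq, getElem_append_left' hp, hqe, hpe]
                  exact hyy2.1
              · refine ⟨p, s, w.length, hps, hs, by simp, ?_, ?_⟩
                · rw [getElem_append_last, getElem_append_left' hs]; omega
                · rw [getElem_append_left' hs, getElem_append_left' hp, hpe]; exact hse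

lemma dir1 (w : List ℕ) (hnd : w.Nodup) (h3 : 3 ≤ (RSP w).length) : Pat w := by
  rcases inv_all w hnd with h | ⟨hlen, -⟩
  · exact h
  · omega

end RS321





/-- A permutation is 321-avoiding iff its Robinson–Schensted insertion tableau
`P_π` has at most two rows. -/
theorem avoids321_iff_RSP_height_le_two {n : ℕ} (π : Equiv.Perm (Fin n)) :
    Avoids321 π ↔ (RSP (List.ofFn (fun i => ((π i : ℕ) + 1)))).length ≤ 2 := by
  set w : List ℕ := List.ofFn (fun i : Fin n => ((π i : ℕ) + 1)) with hw
  have hlen : w.length = n := by simp [hw]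
  have hnd : w.Nodup := by
    rw [hw, List.nodup_ofFn]
    intro a b hab
    simp only [add_left_inj] at hab
    exact π.injective (Fin.val_injective hab)
  have hget : ∀ (q : ℕ) (hq : q < w.length), w[q] = (π ⟨q, hlen ▸ hq⟩ : ℕ) + 1 := by
    intro q hq
    simp [hw]
  constructor
  · intro hA
    by_contra hc
    push_neg at hc
    obtain ⟨i, j, k, h1, h2, h3, ha, hb⟩ := RS321.dir1 w hnd hc
    have hkn : k < n := hlen ▸ h3
    have hjn : j < n := by omega
    have hin : i < n := by omega
    refine hA ⟨i, hin⟩ ⟨j, hjn⟩ ⟨k, hkn⟩ h1 h2 ⟨?_, ?_⟩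
    · rw [Fin.lt_def]
      have := ha
      rw [hget k h3, hget j (h2.trans h3)] at this
      omega
    · rw [Fin.lt_def]
      have := hb
      rw [hget i ((h1.trans h2).trans h3), hget j (h2.trans h3)] at this
      omega
  · intro hle i j k hij hjk hpat
    have hkw : (k : ℕ) < w.length := by rw [hlen]; exact k.isLt
    have hijn : (i : ℕ) < (j : ℕ) := hij
    have hjkn : (j : ℕ) < (k : ℕ) := hjk
    have hjw : (j : ℕ) < w.length := hjkn.trans hkw
    have hiw : (i : ℕ) < w.length := hijn.trans hjw
    have ha : w[(k : ℕ)] < w[(j : ℕ)]'hjw := by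
      rw [hget _ hkw, hget _ hjw]
      simp only [Fin.eta]
      have := hpat.1
      rw [Fin.lt_def] at this
      omega
    have hb : (w[(j : ℕ)]'hjw) < w[(i : ℕ)]'hiw := by
      rw [hget _ hjw, hget _ hiw]
      simp only [Fin.eta]
      have := hpat.2
      rw [Fin.lt_def] at this
      omega
    have h3 := RS321.dir2 w hnd hijn hjkn hkw ha hb
    omega
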